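/- Let T ∈ GL(2,ℝ) with complex eigenvalues cos θ ± i sin θ (det T = 1) such that 0 < cos θ < 1. Then there exists a nonzero a ∈ ℝ² with ‖T⁻¹(a)‖ < 1 such that the map T̄ₐ(x) = (a+T(x))/‖a+T(x)‖ on S¹ has a fixed point. -/

import Mathlib

open RealInnerProductSpace

/-- The "affine" map `x ↦ (a + T(x))/‖a + T(x)‖` induced on the unit sphere. -/
noncomputable def affAct {m : ℕ} (A : Matrix (Fin m) (Fin m) ℝ)
    (a x : EuclideanSpace ℝ (Fin m)) : EuclideanSpace ℝ (Fin m) :=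
  ‖a + Matrix.toEuclideanLin A x‖⁻¹ • (a + Matrix.toEuclideanLin A x)

set_option maxHeartbeats 1000000 in
theorem stmt18 (T : GL (Fin 2) ℝ) (θ : ℝ)
    (hdet : (T : Matrix (Fin 2) (Fin 2) ℝ).det = 1)
    (htr : (T : Matrix (Fin 2) (Fin 2) ℝ).trace = 2 * Real.cos θ)
    (hsin : Real.sin θ ≠ 0)
    (h0 : 0 < Real.cos θ) (h1 : Real.cos θ < 1) :
    ∃ a : EuclideanSpace ℝ (Fin 2), a ≠ 0 ∧
      ‖Matrix.toEuclideanLin ((T⁻¹ : GL (Fin 2) ℝ) : Matrix (Fin 2) (Fin 2) ℝ) a‖ < 1 ∧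
      ∃ x : EuclideanSpace ℝ (Fin 2), ‖x‖ = 1 ∧
        affAct (T : Matrix (Fin 2) (Fin 2) ℝ) a x = x := by
  set A : Matrix (Fin 2) (Fin 2) ℝ := (T : Matrix (Fin 2) (Fin 2) ℝ) with hAdef
  set M : Matrix (Fin 2) (Fin 2) ℝ := ((T⁻¹ : GL (Fin 2) ℝ) : Matrix (Fin 2) (Fin 2) ℝ) with hMdef
  have hMA : M * A = 1 := by simpa [hMdef, hAdef] using T.inv_mul
  have hM : M = A.adjugate := by
    have h1 : A⁻¹ = M := Matrix.inv_eq_left_inv hMA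
    rw [← h1, Matrix.inv_def, hdet]
    simp
  have htrM : M 0 0 + M 1 1 = 2 * Real.cos θ := by
    rw [hM, Matrix.adjugate_fin_two]
    rw [Matrix.trace_fin_two] at htr
    simp
    linarith
  clear_value A M
  have hd : ∃ i : Fin 2, 0 < M i i := by
    by_contra h
    push_neg at h
    have := h 0; have := h 1
    linarith
  obtain ⟨i, hi⟩ := hd
  set x : EuclideanSpace ℝ (Fin 2) := EuclideanSpace.single i (1 : ℝ) with hxdef
  have hx : ‖x‖ = 1 := by simp [hxdef]
  set u : EuclideanSpace ℝ (Fin 2) := Matrix.toEuclideanLin M x with hudef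
  have hui : u i = M i i := by
    rw [hudef, hxdef, Matrix.toEuclideanLin_apply]
    simp [Matrix.mulVec_single]
  have hux : ⟪u, x⟫ = M i i := by
    rw [hxdef, EuclideanSpace.inner_single_right]
    simp [← hxdef, hui]
  have hu0 : u ≠ 0 := by
    intro h
    rw [h, inner_zero_left] at hux
    rw [← hux] at hi
    exact lt_irrefl 0 hi
  have hun : 0 < ‖u‖ := norm_pos_iff.mpr hu0
  clear_value x u
  set c : ℝ := M i i / ‖u‖ ^ 2 with hcdef
  have hc : 0 < c := div_pos hi (by positivity)
  set a : EuclideanSpace ℝ (Fin 2) := c • x - Matrix.toEuclideanLin A x with hadef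
  clear_value a
  clear_value c
  -- a ≠ 0 since A has no real eigenvalue
  have ha0 : a ≠ 0 := by
    intro h
    rw [hadef] at h
    have hAx : Matrix.toEuclideanLin A x = c • x := (sub_eq_zero.mp h).symm
    -- consider B = A - c • 1
    set B : Matrix (Fin 2) (Fin 2) ℝ := A - c • 1 with hBdef
    have hdetB : 0 < B.det := by
      have hdA : A 0 0 * A 1 1 - A 0 1 * A 1 0 = 1 := by
        rw [Matrix.det_fin_two] at hdet; linarith
      have htA : A 0 0 + A 1 1 = 2 * Real.cos θ := by
        rw [Matrix.trace_fin_two] at htr; linarith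
      have hB : B.det = c ^ 2 - 2 * Real.cos θ * c + 1 := by
        rw [hBdef, Matrix.det_fin_two]
        simp [Matrix.one_apply, Matrix.sub_apply, Matrix.smul_apply]
        linear_combination hdA - c * htA
      rw [hB]
      have hcos : Real.cos θ ^ 2 < 1 := by
        have hs : 0 < Real.sin θ ^ 2 := by positivity
        nlinarith [Real.sin_sq_add_cos_sq θ]
      nlinarith [sq_nonneg (c - Real.cos θ)]
    have h1x : Matrix.toEuclideanLin (1 : Matrix (Fin 2) (Fin 2) ℝ) x = x := by
      rw [Matrix.toEuclideanLin_apply, Matrix.one_mulVec]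
    have hBx : Matrix.toEuclideanLin B x = 0 := by
      have hB2 : Matrix.toEuclideanLin B
          = Matrix.toEuclideanLin A - c • Matrix.toEuclideanLin (1 : Matrix (Fin 2) (Fin 2) ℝ) := by
        rw [hBdef, map_sub, map_smul]
      rw [hB2]
      simp only [LinearMap.sub_apply, LinearMap.smul_apply, hAx, h1x]
      abel
    have hx0 : x = 0 := by
      have h2 : B.mulVec (WithLp.equiv 2 (Fin 2 → ℝ) x) = 0 := by
        have := congrArg (WithLp.equiv 2 (Fin 2 → ℝ)) hBx
        simpa [Matrix.ofLp_toEuclideanLin_apply] using this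
      have := Matrix.eq_zero_of_mulVec_eq_zero (ne_of_gt hdetB) h2
      have : x = 0 := by
        apply (WithLp.equiv 2 (Fin 2 → ℝ)).injective
        simpa using this
      exact this
    rw [hx0] at hx
    simp at hx
  refine ⟨a, ha0, ?_, x, hx, ?_⟩
  · -- ‖M a‖ < 1
    have hMAx : Matrix.toEuclideanLin M (Matrix.toEuclideanLin A x) = x := by
      rw [Matrix.toEuclideanLin_apply, Matrix.toEuclideanLin_apply]
      rw [WithLp.ofLp_toLp, Matrix.mulVec_mulVec, hMA, Matrix.one_mulVec, WithLp.toLp_ofLp]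
    have hMa : Matrix.toEuclideanLin M a = c • u - x := by
      rw [hadef, map_sub, map_smul, hMAx, hudef]
    rw [hMa]
    have hns : ‖c • u - x‖ ^ 2 = 1 - (M i i) ^ 2 / ‖u‖ ^ 2 := by
      rw [norm_sub_sq_real, real_inner_smul_left, hux, norm_smul, Real.norm_eq_abs,
        abs_of_pos hc, hx, hcdef]
      field_simp
      ring
    have hlt : ‖c • u - x‖ ^ 2 < 1 := by
      rw [hns]
      have : 0 < (M i i) ^ 2 / ‖u‖ ^ 2 := by positivity
      linarith
    have h1' : ‖c • u - x‖ ^ 2 < 1 ^ 2 := by simpa using hlt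
    exact lt_of_pow_lt_pow_left₀ 2 zero_le_one h1'
  · -- fixed point
    have key : a + Matrix.toEuclideanLin A x = c • x := by
      rw [hadef]; abel
    have hncx : ‖c • x‖ = c := by
      rw [norm_smul, Real.norm_eq_abs, abs_of_pos hc, hx, mul_one]
    unfold affAct
    rw [key, hncx, smul_smul, inv_mul_cancel₀ (ne_of_gt hc), one_smul]
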